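/- Let G be a d-regular graph with spectral expansion at most λ, F ⊂ V of size f, Q = Â[V∖F], and α_F = max_{v∈V∖F} deg_F(v)/d the adversarial density. Then max(1 − α_F, 1 − (1+λ)f/n) ≤ λ₁(Q) ≤ 1 − (1−λ)f/n. -/

import Mathlib

set_option maxHeartbeats 1000000


open Matrix Finset

/-- An orthonormal eigenbasis of a real symmetric matrix, with eigenvalues listed in
decreasing order (with multiplicity). -/
def EigSystem {ι : Type} [Fintype ι] {k : ℕ} (M : Matrix ι ι ℝ)
    (μ : Fin k → ℝ) (φ : Fin k → ι → ℝ) : Prop :=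
  Fintype.card ι = k ∧
  (∀ a b, ∑ i, φ a i * φ b i = if a = b then (1 : ℝ) else 0) ∧
  (∀ a, M.mulVec (φ a) = μ a • φ a) ∧
  (∀ a b : Fin k, a ≤ b → μ b ≤ μ a)


section
variable {ι : Type} [Fintype ι] [DecidableEq ι] {k : ℕ} {M : Matrix ι ι ℝ} {μ : Fin k → ℝ}
  {φ : Fin k → ι → ℝ}

lemma EigSystem.complete (h : EigSystem M μ φ) (i j : ι) :
    ∑ a, φ a i * φ a j = if i = j then (1:ℝ) else 0 := by
  obtain ⟨hcard, horth, _, _⟩ := h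
  have e : Fin k ≃ ι := (Fintype.equivFinOfCardEq hcard).symm
  set P : Matrix (Fin k) ι ℝ := Matrix.of (fun a i => φ a i) with hP
  have h1 : P * Pᵀ = 1 := by
    ext a b
    simpa [Matrix.mul_apply, Matrix.one_apply, hP] using horth a b
  have h2 : Pᵀ * P = 1 := (Matrix.mul_eq_one_comm_of_equiv e).mp h1
  have := congrFun (congrFun h2 i) j
  simpa [Matrix.mul_apply, Matrix.one_apply, hP, mul_comm] using this

lemma EigSystem.expand (h : EigSystem M μ φ) (y : ι → ℝ) (i : ι) :
    y i = ∑ a, (∑ j, y j * φ a j) * φ a i := by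
  have : ∑ a, (∑ j, y j * φ a j) * φ a i
      = ∑ j, y j * ∑ a, φ a j * φ a i := by
    simp_rw [Finset.sum_mul, Finset.mul_sum]
    rw [Finset.sum_comm]
    simp_rw [mul_assoc]
  rw [this]
  simp [h.complete, mul_ite]

lemma EigSystem.dot_mulVec (h : EigSystem M μ φ) (x y : ι → ℝ) :
    ∑ i, x i * M.mulVec y i
      = ∑ a, μ a * ((∑ i, x i * φ a i) * (∑ i, y i * φ a i)) := by
  obtain ⟨hcard, horth, heig, hmono⟩ := h
  have hy : ∀ i, M.mulVec y i = ∑ a, (∑ l, y l * φ a l) * (μ a * φ a i) := by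
    intro i
    have : M.mulVec y i = ∑ j, M i j * ∑ a, (∑ l, y l * φ a l) * φ a j := by
      simp_rw [Matrix.mulVec, dotProduct]
      exact Finset.sum_congr rfl fun j _ => by rw [← EigSystem.expand ⟨hcard, horth, heig, hmono⟩ y j]
    rw [this]
    simp_rw [Finset.mul_sum]
    rw [Finset.sum_comm]
    refine Finset.sum_congr rfl fun a _ => ?_
    have h2 : ∑ j, M i j * ((∑ l, y l * φ a l) * φ a j)
        = (∑ l, y l * φ a l) * (M.mulVec (φ a)) i := by
      simp_rw [Matrix.mulVec, dotProduct, Finset.mul_sum]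
      exact Finset.sum_congr rfl fun j _ => by ring
    rw [h2, heig a]
    simp [smul_eq_mul]
  calc ∑ i, x i * M.mulVec y i
      = ∑ i, ∑ a, x i * ((∑ l, y l * φ a l) * (μ a * φ a i)) := by
        refine Finset.sum_congr rfl fun i _ => ?_
        rw [hy i, Finset.mul_sum]
    _ = ∑ a, μ a * ((∑ i, x i * φ a i) * (∑ i, y i * φ a i)) := by
        rw [Finset.sum_comm]
        refine Finset.sum_congr rfl fun a _ => ?_
        have : ∑ i, x i * ((∑ l, y l * φ a l) * (μ a * φ a i))
            = ∑ i, (μ a * (∑ l, y l * φ a l)) * (x i * φ a i) := by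
          exact Finset.sum_congr rfl fun i _ => by ring
        rw [this, ← Finset.mul_sum]
        ring

lemma EigSystem.parseval (h : EigSystem M μ φ) (x y : ι → ℝ) :
    ∑ a, (∑ i, x i * φ a i) * (∑ i, y i * φ a i) = ∑ i, x i * y i := by
  calc ∑ a, (∑ i, x i * φ a i) * (∑ i, y i * φ a i)
      = ∑ a, ∑ i, (∑ l, x l * φ a l) * (y i * φ a i) := by
        refine Finset.sum_congr rfl fun a _ => ?_; rw [Finset.mul_sum]
    _ = ∑ i, ∑ a, (∑ l, x l * φ a l) * (y i * φ a i) := Finset.sum_comm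
    _ = ∑ i, x i * y i := by
        refine Finset.sum_congr rfl fun i _ => ?_
        have h2 : ∑ a, (∑ l, x l * φ a l) * (y i * φ a i)
            = ∑ a, y i * ((∑ l, x l * φ a l) * φ a i) :=
          Finset.sum_congr rfl fun a _ => by ring
        rw [h2, ← Finset.mul_sum, ← h.expand x i]; ring

end
open Matrix Finset

section
variable {n d : ℕ} (G : SimpleGraph (Fin n)) [DecidableRel G.Adj]

lemma rowsum (hreg : G.IsRegularOfDegree d) (i : Fin n) :
    ∑ j, G.adjMatrix ℝ i j = d := by
  simp [SimpleGraph.adjMatrix_apply, Finset.sum_ite_eq, Finset.sum_boole,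
    ← SimpleGraph.neighborFinset_eq_filter, hreg i]

lemma colsum (hreg : G.IsRegularOfDegree d) (j : Fin n) :
    ∑ i, G.adjMatrix ℝ i j = d := by
  have : ∀ i, G.adjMatrix ℝ i j = G.adjMatrix ℝ j i := by
    intro i; simp [SimpleGraph.adjMatrix_apply, SimpleGraph.adj_comm]
  simp_rw [this]
  exact rowsum G hreg j

lemma one_eig (hd : 0 < d) (hreg : G.IsRegularOfDegree d) :
    ((d : ℝ)⁻¹ • G.adjMatrix ℝ).mulVec (fun _ => (1:ℝ)) = fun _ => (1:ℝ) := by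
  ext v
  have : (G.adjMatrix ℝ).mulVec (fun _ => (1:ℝ)) v = d := by
    have h1 : (G.adjMatrix ℝ).mulVec (fun _ => (1:ℝ)) v = ∑ j, G.adjMatrix ℝ v j := by
      simp [Matrix.mulVec, dotProduct]
    rw [h1, rowsum G hreg v]
  rw [Matrix.smul_mulVec, Pi.smul_apply, this, smul_eq_mul]
  field_simp

lemma sym_dot (M : Matrix (Fin n) (Fin n) ℝ) (hM : ∀ i j, M i j = M j i)
    (u v : Fin n → ℝ) :
    ∑ i, u i * M.mulVec v i = ∑ i, v i * M.mulVec u i := by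
  simp_rw [Matrix.mulVec, dotProduct, Finset.mul_sum]
  rw [Finset.sum_comm]
  refine Finset.sum_congr rfl fun i _ => Finset.sum_congr rfl fun j _ => ?_
  rw [hM j i]; ring

lemma hatA_sym (i j : Fin n) :
    ((d : ℝ)⁻¹ • G.adjMatrix ℝ) i j = ((d : ℝ)⁻¹ • G.adjMatrix ℝ) j i := by
  simp [SimpleGraph.adjMatrix_apply, SimpleGraph.adj_comm]

lemma rayleigh_abs (hd : 0 < d) (hreg : G.IsRegularOfDegree d) (x : Fin n → ℝ) :
    |∑ i, x i * ((d : ℝ)⁻¹ • G.adjMatrix ℝ).mulVec x i| ≤ ∑ i, x i * x i := by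
  have hA : ∀ i j, (0:ℝ) ≤ G.adjMatrix ℝ i j := by
    intro i j; simp [SimpleGraph.adjMatrix_apply]; split <;> norm_num
  have hS : ∑ i, x i * ((d : ℝ)⁻¹ • G.adjMatrix ℝ).mulVec x i
      = (d:ℝ)⁻¹ * ∑ i, ∑ j, G.adjMatrix ℝ i j * (x i * x j) := by
    have hmv : ∀ i, ((d : ℝ)⁻¹ • G.adjMatrix ℝ).mulVec x i
        = ∑ j, (d:ℝ)⁻¹ * (G.adjMatrix ℝ i j * x j) := by
      intro i
      rw [Matrix.smul_mulVec, Pi.smul_apply, smul_eq_mul]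
      have h0 : (G.adjMatrix ℝ *ᵥ x) i = ∑ j, G.adjMatrix ℝ i j * x j := by
        simp [Matrix.mulVec, dotProduct]
      rw [h0, Finset.mul_sum]
    simp_rw [hmv, Finset.mul_sum]
    rw [Finset.sum_comm]
    rw [Finset.sum_comm]
    refine Finset.sum_congr rfl fun i _ => Finset.sum_congr rfl fun j _ => by ring
  have habs : |∑ i, ∑ j, G.adjMatrix ℝ i j * (x i * x j)|
      ≤ ∑ i, ∑ j, G.adjMatrix ℝ i j * ((x i ^ 2 + x j ^ 2) / 2) := by
    refine (Finset.abs_sum_le_sum_abs _ _).trans ?_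
    refine Finset.sum_le_sum fun i _ => ?_
    refine (Finset.abs_sum_le_sum_abs _ _).trans ?_
    refine Finset.sum_le_sum fun j _ => ?_
    rw [abs_mul, abs_of_nonneg (hA i j)]
    refine mul_le_mul_of_nonneg_left ?_ (hA i j)
    rw [abs_mul]
    nlinarith [sq_nonneg (|x i| - |x j|), sq_abs (x i), sq_abs (x j), abs_nonneg (x i), abs_nonneg (x j)]
  have hsplit : ∑ i, ∑ j, G.adjMatrix ℝ i j * ((x i ^ 2 + x j ^ 2) / 2)
      = (d:ℝ) * ∑ i, x i * x i := by
    have h1 : ∑ i, ∑ j, G.adjMatrix ℝ i j * (x i ^ 2 / 2)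
        = (d:ℝ) * ∑ i, x i ^ 2 / 2 := by
      rw [Finset.mul_sum]
      refine Finset.sum_congr rfl fun i _ => ?_
      rw [← Finset.sum_mul, rowsum G hreg i]
    have h2 : ∑ i, ∑ j, G.adjMatrix ℝ i j * (x j ^ 2 / 2)
        = (d:ℝ) * ∑ j, x j ^ 2 / 2 := by
      rw [Finset.sum_comm, Finset.mul_sum]
      refine Finset.sum_congr rfl fun j _ => ?_
      rw [← Finset.sum_mul, colsum G hreg j]
    calc ∑ i, ∑ j, G.adjMatrix ℝ i j * ((x i ^ 2 + x j ^ 2) / 2)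
        = ∑ i, ∑ j, (G.adjMatrix ℝ i j * (x i ^ 2 / 2)
            + G.adjMatrix ℝ i j * (x j ^ 2 / 2)) := by
          refine Finset.sum_congr rfl fun i _ => Finset.sum_congr rfl fun j _ => by ring
      _ = (d:ℝ) * ∑ i, x i ^ 2 / 2 + (d:ℝ) * ∑ j, x j ^ 2 / 2 := by
          simp_rw [Finset.sum_add_distrib]; rw [h1, h2]
      _ = (d:ℝ) * ∑ i, x i * x i := by
          rw [← mul_add, ← Finset.sum_add_distrib]
          congr 1
          refine Finset.sum_congr rfl fun i _ => by ring
  rw [hS, abs_mul, abs_of_nonneg (by positivity : (0:ℝ) ≤ (d:ℝ)⁻¹)]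
  calc (d:ℝ)⁻¹ * |∑ i, ∑ j, G.adjMatrix ℝ i j * (x i * x j)|
      ≤ (d:ℝ)⁻¹ * ((d:ℝ) * ∑ i, x i * x i) := by
        refine mul_le_mul_of_nonneg_left ?_ (by positivity)
        rw [← hsplit]; exact habs
    _ = ∑ i, x i * x i := by
        field_simp
end

section KeyLemma

lemma mu_abs_le_one {n d : ℕ} (hd : 0 < d) {G : SimpleGraph (Fin n)} [DecidableRel G.Adj]
    (hreg : G.IsRegularOfDegree d) {μ : Fin n → ℝ} {φ : Fin n → Fin n → ℝ}
    (hA : EigSystem ((d : ℝ)⁻¹ • G.adjMatrix ℝ) μ φ) (t : Fin n) : |μ t| ≤ 1 := by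
  obtain ⟨hcard, horth, heig, hmono⟩ := hA
  have hval : ∑ i, φ t i * ((d : ℝ)⁻¹ • G.adjMatrix ℝ).mulVec (φ t) i = μ t := by
    rw [heig t]
    have : ∑ i, φ t i * (μ t • φ t) i = μ t * ∑ i, φ t i * φ t i := by
      rw [Finset.mul_sum]
      exact Finset.sum_congr rfl fun i _ => by simp [smul_eq_mul]; ring
    rw [this, horth t t]
    simp
  have hnorm : ∑ i, φ t i * φ t i = 1 := by simpa using horth t t
  have := rayleigh_abs G hd hreg (φ t)
  rw [hval, hnorm] at this
  exact this

lemma mu_abs_le_lam {n : ℕ} (hn : 2 ≤ n) {μ : Fin n → ℝ} {lam : ℝ}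
    (hmono : ∀ a b : Fin n, a ≤ b → μ b ≤ μ a)
    (hlam : max |μ ⟨1, by omega⟩| |μ ⟨n - 1, by omega⟩| ≤ lam)
    (t : Fin n) (ht : t ≠ ⟨0, by omega⟩) : |μ t| ≤ lam := by
  have h1 : (⟨1, by omega⟩ : Fin n) ≤ t := by
    have : (1:ℕ) ≤ t.1 := by
      rcases Nat.eq_zero_or_pos t.1 with h | h
      · exact absurd (Fin.ext h) ht
      · exact h
    exact this
  have h2 : t ≤ (⟨n - 1, by omega⟩ : Fin n) := by
    have : t.1 ≤ n - 1 := by omega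
    exact this
  have ha := hmono _ t h1
  have hb := hmono t _ h2
  rcases le_or_gt 0 (μ t) with h | h
  · have : μ t ≤ |μ ⟨1, by omega⟩| := le_trans ha (le_abs_self _)
    calc |μ t| = μ t := abs_of_nonneg h
      _ ≤ |μ ⟨1, by omega⟩| := this
      _ ≤ lam := le_trans (le_max_left _ _) hlam
  · calc |μ t| = -μ t := abs_of_neg h
      _ ≤ -μ ⟨n - 1, by omega⟩ := by linarith
      _ ≤ |μ ⟨n - 1, by omega⟩| := neg_le_abs _
      _ ≤ lam := le_trans (le_max_right _ _) hlam

lemma lam_nonneg {n : ℕ} (hn : 2 ≤ n) {μ : Fin n → ℝ} {lam : ℝ}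
    (hlam : max |μ ⟨1, by omega⟩| |μ ⟨n - 1, by omega⟩| ≤ lam) : 0 ≤ lam :=
  le_trans (le_trans (abs_nonneg _) (le_max_left _ _)) hlam

lemma key_bound {n d : ℕ} (hd : 0 < d) (hn : 2 ≤ n) {G : SimpleGraph (Fin n)}
    [DecidableRel G.Adj] (hreg : G.IsRegularOfDegree d)
    {μ : Fin n → ℝ} {φ : Fin n → Fin n → ℝ}
    (hA : EigSystem ((d : ℝ)⁻¹ • G.adjMatrix ℝ) μ φ) {lam : ℝ}
    (hlam : max |μ ⟨1, by omega⟩| |μ ⟨n - 1, by omega⟩| ≤ lam)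
    (y z : Fin n → ℝ) (hy : ∑ i, y i = 0) (hz : ∑ i, z i = 0) :
    ∑ i, y i * ((d : ℝ)⁻¹ • G.adjMatrix ℝ).mulVec z i
      ≤ lam * ∑ t, |∑ i, y i * φ t i| * |∑ i, z i * φ t i| := by
  set A := ((d : ℝ)⁻¹ • G.adjMatrix ℝ) with hAdef
  obtain ⟨hcard, horth, heig, hmono⟩ := hA
  have hA' : EigSystem A μ φ := ⟨hcard, horth, heig, hmono⟩
  have hlam0 : 0 ≤ lam := lam_nonneg hn hlam
  have i0 : Fin n := ⟨0, by omega⟩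
  -- sum over eigenbasis
  rw [hA'.dot_mulVec y z, Finset.mul_sum]
  -- termwise bound
  refine Finset.sum_le_sum fun t _ => ?_
  by_cases ht : t = (⟨0, by omega⟩ : Fin n)
  · -- top eigenvalue term
    rcases lt_or_ge lam 1 with hl | hl
    · -- lam < 1 : the projections on φ 0 vanish
      have hs : ∀ s : Fin n, s ≠ ⟨0, by omega⟩ → ∑ i, φ s i = 0 := by
        intro s hs0
        have hmu : |μ s| ≤ lam := mu_abs_le_lam hn hmono hlam s hs0
        have hne1 : μ s ≠ 1 := by
          intro h; rw [h] at hmu; simp at hmu; linarith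
        have e1 : ∑ i, (fun _ => (1:ℝ)) i * A.mulVec (φ s) i = μ s * ∑ i, φ s i := by
          rw [heig s]
          simp_rw [Pi.smul_apply, smul_eq_mul, one_mul]
          rw [Finset.mul_sum]
        have e2 : ∑ i, (fun _ => (1:ℝ)) i * A.mulVec (φ s) i = ∑ i, φ s i := by
          rw [sym_dot A (hatA_sym G) (fun _ => (1:ℝ)) (φ s), one_eig G hd hreg]
          simp
        have : (μ s - 1) * ∑ i, φ s i = 0 := by rw [sub_mul, one_mul, ← e1, e2]; ring
        rcases mul_eq_zero.mp this with h | h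
        · exact absurd (by linarith [sub_eq_zero.mp h] : μ s = 1) hne1
        · exact h
      have hdot0 : ∀ w : Fin n → ℝ, ∑ i, w i = 0 →
          ∑ i, w i * φ (⟨0, by omega⟩ : Fin n) i = 0 := by
        intro w hw
        have hp := hA'.parseval w (fun _ => (1:ℝ))
        simp only [mul_one] at hp
        rw [hw] at hp
        have hred : ∑ a, (∑ i, w i * φ a i) * (∑ i, (1:ℝ) * φ a i)
            = (∑ i, w i * φ (⟨0, by omega⟩ : Fin n) i) *
              (∑ i, φ (⟨0, by omega⟩ : Fin n) i) := by
          rw [Finset.sum_eq_single (⟨0, by omega⟩ : Fin n)]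
          · simp
          · intro b _ hb
            have := hs b hb
            simp [this]
          · simp
        rw [hred] at hp
        have hs0 : (∑ i, φ (⟨0, by omega⟩ : Fin n) i) ≠ 0 := by
          intro h0
          have hp2 := hA'.parseval (fun _ => (1:ℝ)) (fun _ => (1:ℝ))
          simp only [one_mul] at hp2
          have hred2 : ∑ a, (∑ i, φ a i) * (∑ i, φ a i) = 0 := by
            refine Finset.sum_eq_zero fun b _ => ?_
            by_cases hb : b = (⟨0, by omega⟩ : Fin n)
            · rw [hb, h0]; ring
            · rw [hs b hb]; ring
          rw [hred2] at hp2
          have h1 : (0:ℝ) = n := by simpa using hp2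
          have h2 : (0:ℝ) < n := by positivity
          linarith
        exact (mul_eq_zero.mp hp).resolve_right hs0
      rw [ht, hdot0 y hy]
      simp
    · -- 1 ≤ lam
      have h1 := mu_abs_le_one hd hreg hA' t
      calc μ t * ((∑ i, y i * φ t i) * (∑ i, z i * φ t i))
          ≤ |μ t * ((∑ i, y i * φ t i) * (∑ i, z i * φ t i))| := le_abs_self _
        _ = |μ t| * (|∑ i, y i * φ t i| * |∑ i, z i * φ t i|) := by
            rw [abs_mul, abs_mul]
        _ ≤ lam * (|∑ i, y i * φ t i| * |∑ i, z i * φ t i|) := by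
            refine mul_le_mul_of_nonneg_right (le_trans h1 hl) (by positivity)
  · have h1 : |μ t| ≤ lam := mu_abs_le_lam hn hmono hlam t ht
    calc μ t * ((∑ i, y i * φ t i) * (∑ i, z i * φ t i))
        ≤ |μ t * ((∑ i, y i * φ t i) * (∑ i, z i * φ t i))| := le_abs_self _
      _ = |μ t| * (|∑ i, y i * φ t i| * |∑ i, z i * φ t i|) := by rw [abs_mul, abs_mul]
      _ ≤ lam * (|∑ i, y i * φ t i| * |∑ i, z i * φ t i|) :=
          mul_le_mul_of_nonneg_right h1 (by positivity)

end KeyLemma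

/-- Let `G` be a connected `d`-regular graph on `n` vertices with
spectral expansion at most `λ`, `F ⊂ V` of size `f < n`, `Q = Â[V∖F]`, and
`α_F = max_{v ∉ F} deg_F(v)/d` the adversarial density.  Then
`max (1 − α_F, 1 − (1+λ) f/n) ≤ λ₁(Q) ≤ 1 − (1−λ) f/n`. -/
theorem stmt_5 (n d f : ℕ) (hd : 0 < d) (hn : 2 ≤ n) (hfn : f < n)
    (G : SimpleGraph (Fin n)) [DecidableRel G.Adj] (hconn : G.Connected)
    (hreg : G.IsRegularOfDegree d)
    (F : Finset (Fin n)) (hF : F.card = f) (hne : Fᶜ.Nonempty)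
    (α : ℝ) (hα : α = Fᶜ.sup' hne fun v => ((F.filter (G.Adj v)).card : ℝ) / d)
    (μ : Fin n → ℝ) (φ : Fin n → Fin n → ℝ)
    (hA : EigSystem ((d : ℝ)⁻¹ • G.adjMatrix ℝ) μ φ)
    (lam : ℝ) (hlam : max |μ ⟨1, by omega⟩| |μ ⟨n - 1, by omega⟩| ≤ lam)
    (ν : Fin (n - f) → ℝ) (ψ : Fin (n - f) → {v : Fin n // v ∉ F} → ℝ)
    (hQ : EigSystem (((d : ℝ)⁻¹ • G.adjMatrix ℝ).submatrix
        (fun v : {v : Fin n // v ∉ F} => (v : Fin n)) (fun v => (v : Fin n))) ν ψ) :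
    max (1 - α) (1 - (1 + lam) * ((f : ℝ) / n)) ≤ ν ⟨0, by omega⟩ ∧
      ν ⟨0, by omega⟩ ≤ 1 - (1 - lam) * ((f : ℝ) / n) := by
  set Ah := ((d : ℝ)⁻¹ • G.adjMatrix ℝ) with hAh
  set Q := (Ah.submatrix (fun v : {v : Fin n // v ∉ F} => (v : Fin n)) (fun v : {v : Fin n // v ∉ F} => (v : Fin n)))
    with hQdef
  have hQ' : EigSystem Q ν ψ := by exact hQ
  obtain ⟨hcardQ, horthQ, heigQ, hmonoQ⟩ := hQ
  set a0 : Fin (n - f) := ⟨0, by omega⟩ with ha0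
  have hlam0 : 0 ≤ lam := lam_nonneg hn hlam
  have hn0 : (0:ℝ) < n := by positivity
  have hd0 : (0:ℝ) < d := by positivity
  have hfn' : (f:ℝ) < n := by exact_mod_cast hfn
  have hcompl : (Fᶜ : Finset (Fin n)).card = n - f := by
    rw [Finset.card_compl, hF]; simp
  have hnf0 : (0:ℝ) < (n:ℝ) - f := by linarith
  have hcastnf : ((n - f : ℕ) : ℝ) = (n:ℝ) - f := by
    rw [Nat.cast_sub (le_of_lt hfn)]
  -- Rayleigh upper bound for Q
  have hray : ∀ x : {v : Fin n // v ∉ F} → ℝ,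
      ∑ v, x v * Q.mulVec x v ≤ ν a0 * ∑ v, x v * x v := by
    intro x
    rw [hQ'.dot_mulVec x x, ← hQ'.parseval x x, Finset.mul_sum]
    refine Finset.sum_le_sum fun t _ => ?_
    refine mul_le_mul_of_nonneg_right (hmonoQ a0 t ?_) (mul_self_nonneg _)
    exact Fin.mk_le_of_le_val (Nat.zero_le _)
  -- cardinality of the subtype as a real sum
  have hcard1 : ∑ _v : {v : Fin n // v ∉ F}, (1:ℝ) = (n:ℝ) - f := by
    rw [Finset.sum_const, Finset.card_univ, hcardQ, nsmul_eq_mul, hcastnf, mul_one]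
  -- the number of F-neighbours
  set cF : Fin n → ℝ := fun v => ((F.filter (G.Adj v)).card : ℝ) with hcF
  have hrowF : ∀ v : Fin n, ∑ j ∈ F, G.adjMatrix ℝ v j = cF v := by
    intro v
    simp [SimpleGraph.adjMatrix_apply, hcF, Finset.sum_boole]
  -- mulVec of constant one over Q
  have hQmv : ∀ v : {v : Fin n // v ∉ F},
      Q.mulVec (fun _ => (1:ℝ)) v = 1 - cF v.1 / d := by
    intro v
    have h1 : Q.mulVec (fun _ => (1:ℝ)) v = ∑ w : {v : Fin n // v ∉ F}, Ah v.1 w.1 := by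
      simp [Matrix.mulVec, dotProduct, hQdef, Matrix.submatrix_apply]
    have h2 : ∑ w : {v : Fin n // v ∉ F}, Ah v.1 w.1 = ∑ w ∈ Fᶜ, Ah v.1 w := by
      rw [Finset.sum_subtype Fᶜ (fun x => Finset.mem_compl) (fun w => Ah v.1 w)]
    have h3 : ∑ w ∈ Fᶜ, Ah v.1 w = (d:ℝ)⁻¹ * ((d:ℝ) - cF v.1) := by
      have hsplit : ∑ w ∈ F, Ah v.1 w + ∑ w ∈ Fᶜ, Ah v.1 w = ∑ w, Ah v.1 w :=
        Finset.sum_add_sum_compl F _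
      have hAhval : ∀ w, Ah v.1 w = (d:ℝ)⁻¹ * G.adjMatrix ℝ v.1 w := by
        intro w; simp [hAh]
      have hfull : ∑ w, Ah v.1 w = (d:ℝ)⁻¹ * d := by
        simp_rw [hAhval]
        rw [← Finset.mul_sum, rowsum G hreg v.1]
      have hFpart : ∑ w ∈ F, Ah v.1 w = (d:ℝ)⁻¹ * cF v.1 := by
        simp_rw [hAhval]
        rw [← Finset.mul_sum, hrowF v.1]
      have := hsplit
      rw [hfull, hFpart] at this
      linarith
    rw [h1, h2, h3]
    field_simp
  have hdot1Q : ∑ v : {v : Fin n // v ∉ F}, Q.mulVec (fun _ => (1:ℝ)) v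
      = ((n:ℝ) - f) - ∑ v ∈ Fᶜ, cF v / d := by
    have h1 : ∑ v : {v : Fin n // v ∉ F}, Q.mulVec (fun _ => (1:ℝ)) v
        = ∑ v : {v : Fin n // v ∉ F}, (1 - cF v.1 / d) := by
      exact Finset.sum_congr rfl fun v _ => hQmv v
    rw [h1, ← Finset.sum_subtype Fᶜ (fun x => Finset.mem_compl) (fun w => 1 - cF w / d)]
    rw [Finset.sum_sub_distrib]
    congr 1
    rw [Finset.sum_const, hcompl, nsmul_eq_mul, hcastnf, mul_one]
  -- LOWER BOUND 1: via α
  have hlower1 : (1 - α) * ((n:ℝ) - f) ≤ ν a0 * ((n:ℝ) - f) := by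
    have hb : ∀ v ∈ Fᶜ, 1 - α ≤ 1 - cF v / d := by
      intro v hv
      have := Finset.le_sup' (fun v => ((F.filter (G.Adj v)).card : ℝ) / d) hv
      rw [← hα] at this
      simp only [hcF]
      linarith
    have h1 : (1 - α) * ((n:ℝ) - f) ≤ ∑ v ∈ Fᶜ, (1 - cF v / d) := by
      have := Finset.sum_le_sum hb
      rw [Finset.sum_const, hcompl] at this
      calc (1 - α) * ((n:ℝ) - f) = (n - f : ℕ) • (1 - α) := by
            rw [nsmul_eq_mul, hcastnf]; ring
        _ ≤ _ := this
    have h2 : ∑ v ∈ Fᶜ, (1 - cF v / d)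
        = ∑ v : {v : Fin n // v ∉ F}, Q.mulVec (fun _ => (1:ℝ)) v := by
      rw [Finset.sum_subtype Fᶜ (fun x => Finset.mem_compl) (fun w => 1 - cF w / (d:ℝ))]
      exact (Finset.sum_congr rfl fun v _ => (hQmv v).symm)
    have h3 := hray (fun _ => (1:ℝ))
    simp only [one_mul, mul_one] at h3
    rw [hcard1] at h3
    calc (1 - α) * ((n:ℝ) - f) ≤ ∑ v ∈ Fᶜ, (1 - cF v / d) := h1
      _ = _ := h2
      _ ≤ ν a0 * ((n:ℝ) - f) := h3
  -- LOWER BOUND 2: via expander mixing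
  have hEML : ∑ v ∈ Fᶜ, cF v / d ≤ (1 + lam) * ((f:ℝ) * ((n:ℝ) - f) / n) := by
    set bb : Fin n → ℝ := fun i => if i ∈ F then 0 else 1 with hbb
    set aa : Fin n → ℝ := fun i => if i ∈ F then 1 else 0 with haa
    set cb : ℝ := ((n:ℝ) - f) / n with hcb
    set ca : ℝ := (f:ℝ) / n with hca
    set y : Fin n → ℝ := fun i => bb i - cb with hy
    set z : Fin n → ℝ := fun i => aa i - ca with hz
    have hsplitC : ∀ g : Fin n → ℝ, (∀ i ∈ F, g i = 0) → ∑ i, g i = ∑ i ∈ Fᶜ, g i := by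
      intro g hg
      have h := Finset.sum_add_sum_compl F g
      rw [Finset.sum_eq_zero hg] at h
      linarith
    have hsplitF : ∀ g : Fin n → ℝ, (∀ i ∈ Fᶜ, g i = 0) → ∑ i, g i = ∑ i ∈ F, g i := by
      intro g hg
      have h := Finset.sum_add_sum_compl F g
      rw [Finset.sum_eq_zero hg] at h
      linarith
    have hsumb : ∑ i, bb i = (n:ℝ) - f := by
      rw [hsplitC bb (fun i hi => by simp [hbb, hi])]
      rw [Finset.sum_congr rfl (fun i hi => show bb i = 1 by
        simp [hbb, Finset.mem_compl.mp hi])]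
      rw [Finset.sum_const, hcompl, nsmul_eq_mul, hcastnf, mul_one]
    have hsuma : ∑ i, aa i = (f:ℝ) := by
      rw [hsplitF aa (fun i hi => by simp [haa, Finset.mem_compl.mp hi])]
      rw [Finset.sum_congr rfl (fun i hi => show aa i = 1 by simp [haa, hi])]
      rw [Finset.sum_const, hF, nsmul_eq_mul, mul_one]
    have hysum : ∑ i, y i = 0 := by
      simp only [hy]
      rw [Finset.sum_sub_distrib, hsumb, Finset.sum_const, Finset.card_univ]
      simp only [hcb, nsmul_eq_mul, Fintype.card_fin]
      field_simp
      ring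
    have hzsum : ∑ i, z i = 0 := by
      simp only [hz]
      rw [Finset.sum_sub_distrib, hsuma, Finset.sum_const, Finset.card_univ]
      simp only [hca, nsmul_eq_mul, Fintype.card_fin]
      field_simp
      ring
    have hyy : ∑ i, y i * y i = (f:ℝ) * ((n:ℝ) - f) / n := by
      have hexp : ∀ i, y i * y i = bb i * bb i - 2 * cb * bb i + cb * cb := by
        intro i; simp only [hy]; ring
      have hbsq : ∀ i, bb i * bb i = bb i := by
        intro i; simp only [hbb]; split <;> ring
      simp_rw [hexp, hbsq]
      rw [Finset.sum_add_distrib, Finset.sum_sub_distrib, hsumb, ← Finset.mul_sum, hsumb,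
        Finset.sum_const, Finset.card_univ]
      simp only [hcb, nsmul_eq_mul, Fintype.card_fin]
      field_simp
      ring
    have hzz : ∑ i, z i * z i = (f:ℝ) * ((n:ℝ) - f) / n := by
      have hexp : ∀ i, z i * z i = aa i * aa i - 2 * ca * aa i + ca * ca := by
        intro i; simp only [hz]; ring
      have hasq : ∀ i, aa i * aa i = aa i := by
        intro i; simp only [haa]; split <;> ring
      simp_rw [hexp, hasq]
      rw [Finset.sum_add_distrib, Finset.sum_sub_distrib, hsuma, ← Finset.mul_sum, hsuma,
        Finset.sum_const, Finset.card_univ]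
      simp only [hca, nsmul_eq_mul, Fintype.card_fin]
      field_simp
      ring
    -- the quantity ∑ bb * Ah aa equals the edge count
    have hmva : ∀ i, Ah.mulVec aa i = cF i / d := by
      intro i
      have h0 : (G.adjMatrix ℝ *ᵥ aa) i = ∑ j, G.adjMatrix ℝ i j * aa j := by
        simp [Matrix.mulVec, dotProduct]
      have h1 : ∑ j, G.adjMatrix ℝ i j * aa j = ∑ j ∈ F, G.adjMatrix ℝ i j := by
        simp only [haa, mul_ite, mul_one, mul_zero]
        rw [Finset.sum_ite_mem]
        simp
      rw [hAh, Matrix.smul_mulVec, Pi.smul_apply, smul_eq_mul, h0, h1, hrowF i]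
      ring
    have hE : ∑ i, bb i * Ah.mulVec aa i = ∑ v ∈ Fᶜ, cF v / d := by
      rw [hsplitC _ (fun i hi => by simp [hbb, hi])]
      refine Finset.sum_congr rfl fun i hi => ?_
      rw [hmva i]
      simp [hbb, Finset.mem_compl.mp hi]
    -- decomposition
    have hAone := one_eig G hd hreg
    have hmvz : Ah.mulVec aa = fun i => Ah.mulVec z i + ca := by
      have haz : aa = fun i => z i + ca * 1 := by funext i; simp only [hz]; ring
      rw [haz]
      have : (fun i => z i + ca * 1) = z + ca • (fun _ => (1:ℝ)) := by
        funext i; simp [smul_eq_mul]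
      rw [this, Matrix.mulVec_add, Matrix.mulVec_smul, hAone]
      funext i; simp [smul_eq_mul]
    have hsumAz : ∑ i, Ah.mulVec z i = 0 := by
      have h1 : ∑ i, (1:ℝ) * Ah.mulVec z i = ∑ i, z i * Ah.mulVec (fun _ => (1:ℝ)) i :=
        sym_dot Ah (hatA_sym G) _ _
      rw [hAone] at h1
      simp only [one_mul, mul_one] at h1
      rw [h1, hzsum]
    have hdecomp : ∑ i, bb i * Ah.mulVec aa i
        = ∑ i, y i * Ah.mulVec z i + (f:ℝ) * ((n:ℝ) - f) / n := by
      rw [hmvz]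
      have : ∀ i, bb i * (Ah.mulVec z i + ca)
          = y i * Ah.mulVec z i + cb * Ah.mulVec z i + ca * y i + ca * cb := by
        intro i
        have : bb i = y i + cb := by simp [hy]
        rw [this]; ring
      simp_rw [this]
      rw [Finset.sum_add_distrib, Finset.sum_add_distrib, Finset.sum_add_distrib,
        ← Finset.mul_sum, ← Finset.mul_sum, hsumAz, hysum, Finset.sum_const,
        Finset.card_univ]
      simp only [nsmul_eq_mul, Fintype.card_fin, mul_zero, add_zero]
      simp only [hca, hcb]
      field_simp
    -- Cauchy–Schwarz bound on projections
    have hkb := key_bound hd hn hreg hA hlam y z hysum hzsum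
    set T : ℝ := ∑ t, |∑ i, y i * φ t i| * |∑ i, z i * φ t i| with hT
    have hTnn : 0 ≤ T := Finset.sum_nonneg fun t _ => mul_nonneg (abs_nonneg _) (abs_nonneg _)
    have hTsq : T ^ 2 ≤ ((f:ℝ) * ((n:ℝ) - f) / n) ^ 2 := by
      have hcs := Finset.sum_mul_sq_le_sq_mul_sq Finset.univ
        (fun t => |∑ i, y i * φ t i|) (fun t => |∑ i, z i * φ t i|)
      have hpy : ∑ t, |∑ i, y i * φ t i| ^ 2 = (f:ℝ) * ((n:ℝ) - f) / n := by
        have : ∀ t : Fin n, |∑ i, y i * φ t i| ^ 2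
            = (∑ i, y i * φ t i) * (∑ i, y i * φ t i) := by
          intro t; rw [sq_abs]; ring
        simp_rw [this]
        rw [hA.parseval y y, hyy]
      have hpz : ∑ t, |∑ i, z i * φ t i| ^ 2 = (f:ℝ) * ((n:ℝ) - f) / n := by
        have : ∀ t : Fin n, |∑ i, z i * φ t i| ^ 2
            = (∑ i, z i * φ t i) * (∑ i, z i * φ t i) := by
          intro t; rw [sq_abs]; ring
        simp_rw [this]
        rw [hA.parseval z z, hzz]
      rw [hpy, hpz] at hcs
      calc T ^ 2 ≤ (f:ℝ) * ((n:ℝ) - f) / n * ((f:ℝ) * ((n:ℝ) - f) / n) := hcs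
        _ = ((f:ℝ) * ((n:ℝ) - f) / n) ^ 2 := by ring
    have hB0 : (0:ℝ) ≤ (f:ℝ) * ((n:ℝ) - f) / n := by positivity
    have hTle : T ≤ (f:ℝ) * ((n:ℝ) - f) / n := by nlinarith
    calc ∑ v ∈ Fᶜ, cF v / d = ∑ i, bb i * Ah.mulVec aa i := hE.symm
      _ = ∑ i, y i * Ah.mulVec z i + (f:ℝ) * ((n:ℝ) - f) / n := hdecomp
      _ ≤ lam * T + (f:ℝ) * ((n:ℝ) - f) / n := by linarith
      _ ≤ lam * ((f:ℝ) * ((n:ℝ) - f) / n) + (f:ℝ) * ((n:ℝ) - f) / n := by nlinarith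
      _ = (1 + lam) * ((f:ℝ) * ((n:ℝ) - f) / n) := by ring
  have hlower2 : (1 - (1 + lam) * ((f:ℝ) / n)) * ((n:ℝ) - f) ≤ ν a0 * ((n:ℝ) - f) := by
    have h3 := hray (fun _ => (1:ℝ))
    simp only [one_mul, mul_one] at h3
    rw [hcard1, hdot1Q] at h3
    have : (1 - (1 + lam) * ((f:ℝ) / n)) * ((n:ℝ) - f)
        ≤ ((n:ℝ) - f) - ∑ v ∈ Fᶜ, cF v / d := by
      have h4 : (1 + lam) * ((f:ℝ) / n) * ((n:ℝ) - f)
          = (1 + lam) * ((f:ℝ) * ((n:ℝ) - f) / n) := by ring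
      nlinarith [hEML]
    linarith
  constructor
  · rw [max_le_iff]
    constructor
    · have := mul_le_mul_of_nonneg_right (le_refl (1:ℝ)) (le_of_lt hnf0)
      nlinarith [hlower1]
    · nlinarith [hlower2]
  · -- UPPER BOUND
    set x : Fin n → ℝ := fun i => if h : i ∈ F then 0 else ψ a0 ⟨i, h⟩ with hx
    have hxF : ∀ i ∈ F, x i = 0 := fun i hi => by simp [hx, hi]
    have hxval : ∀ v : {v : Fin n // v ∉ F}, x v.1 = ψ a0 v := by
      intro v
      simp only [hx, dif_neg v.2]
    have hsplitC : ∀ g : Fin n → ℝ, (∀ i ∈ F, g i = 0) → ∑ i, g i = ∑ i ∈ Fᶜ, g i := by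
      intro g hg
      have h := Finset.sum_add_sum_compl F g
      rw [Finset.sum_eq_zero hg] at h
      linarith
    have hxnorm : ∑ i, x i * x i = 1 := by
      rw [hsplitC _ (fun i hi => by rw [hxF i hi]; ring)]
      rw [Finset.sum_subtype Fᶜ (fun i => Finset.mem_compl) (fun i => x i * x i)]
      rw [Finset.sum_congr rfl (fun v _ => show x v.1 * x v.1 = ψ a0 v * ψ a0 v by
        rw [hxval v])]
      simpa using horthQ a0 a0
    have hmvx : ∀ v : {v : Fin n // v ∉ F}, Ah.mulVec x v.1 = ν a0 * ψ a0 v := by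
      intro v
      have h1 : Ah.mulVec x v.1 = ∑ j, Ah v.1 j * x j := by
        simp [Matrix.mulVec, dotProduct]
      have h2 : ∑ j, Ah v.1 j * x j = ∑ j ∈ Fᶜ, Ah v.1 j * x j :=
        hsplitC (fun j => Ah v.1 j * x j) (fun j hj => by
          show Ah v.1 j * x j = 0
          rw [hxF j hj]; ring)
      have h3 : ∑ j ∈ Fᶜ, Ah v.1 j * x j = ∑ w : {v : Fin n // v ∉ F}, Ah v.1 w.1 * ψ a0 w := by
        rw [Finset.sum_subtype Fᶜ (fun i => Finset.mem_compl) (fun j => Ah v.1 j * x j)]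
        exact Finset.sum_congr rfl fun w _ => by rw [hxval w]
      have h4 : ∑ w : {v : Fin n // v ∉ F}, Ah v.1 w.1 * ψ a0 w = Q.mulVec (ψ a0) v := by
        simp [hQdef, Matrix.mulVec, dotProduct, Matrix.submatrix_apply]
      have h5 : Q.mulVec (ψ a0) v = ν a0 * ψ a0 v := by
        rw [heigQ a0]; simp [smul_eq_mul]
      rw [h1, h2, h3, h4, h5]
    have hxeig : ∑ i, x i * Ah.mulVec x i = ν a0 := by
      rw [hsplitC _ (fun i hi => by rw [hxF i hi]; ring)]
      rw [Finset.sum_subtype Fᶜ (fun i => Finset.mem_compl) (fun i => x i * Ah.mulVec x i)]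
      rw [Finset.sum_congr rfl (fun v _ => show x v.1 * Ah.mulVec x v.1
        = ν a0 * (ψ a0 v * ψ a0 v) by rw [hxval v, hmvx v]; ring)]
      rw [← Finset.mul_sum, horthQ a0 a0]
      simp
    set c : ℝ := (∑ j, x j) / n with hc
    set y : Fin n → ℝ := fun i => x i - c with hy
    have hysum : ∑ i, y i = 0 := by
      simp only [hy]
      rw [Finset.sum_sub_distrib, Finset.sum_const, Finset.card_univ]
      simp only [Fintype.card_fin, nsmul_eq_mul, hc]
      field_simp
      ring
    have hkb := key_bound hd hn hreg hA hlam y y hysum hysum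
    have hTy : ∑ t, |∑ i, y i * φ t i| * |∑ i, y i * φ t i| = ∑ i, y i * y i := by
      simp_rw [abs_mul_abs_self]
      exact hA.parseval y y
    rw [hTy] at hkb
    have hAone := one_eig G hd hreg
    have hmvy : Ah.mulVec x = fun i => Ah.mulVec y i + c := by
      have hxy : x = fun i => y i + c * 1 := by funext i; simp only [hy]; ring
      rw [hxy]
      have h9 : (fun i => y i + c * 1) = y + c • (fun _ => (1:ℝ)) := by
        funext i; simp [smul_eq_mul]
      rw [h9, Matrix.mulVec_add, Matrix.mulVec_smul, hAone]
      funext i; simp [smul_eq_mul]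
    have hsumAy : ∑ i, Ah.mulVec y i = 0 := by
      have h1 : ∑ i, (1:ℝ) * Ah.mulVec y i = ∑ i, y i * Ah.mulVec (fun _ => (1:ℝ)) i :=
        sym_dot Ah (hatA_sym G) _ _
      rw [hAone] at h1
      simp only [one_mul, mul_one] at h1
      rw [h1, hysum]
    have hdec : ∑ i, x i * Ah.mulVec x i
        = ∑ i, y i * Ah.mulVec y i + (n:ℝ) * (c * c) := by
      rw [hmvy]
      have h8 : ∀ i, x i * (Ah.mulVec y i + c)
          = y i * Ah.mulVec y i + c * Ah.mulVec y i + c * y i + c * c := by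
        intro i
        have : x i = y i + c := by simp [hy]
        rw [this]; ring
      simp_rw [h8]
      rw [Finset.sum_add_distrib, Finset.sum_add_distrib, Finset.sum_add_distrib,
        ← Finset.mul_sum, ← Finset.mul_sum, hsumAy, hysum, Finset.sum_const,
        Finset.card_univ]
      simp only [nsmul_eq_mul, Fintype.card_fin, mul_zero, add_zero]
    have hyy : ∑ i, y i * y i = 1 - (n:ℝ) * (c * c) := by
      have h8 : ∀ i, y i * y i = x i * x i - 2 * c * x i + c * c := by
        intro i; simp only [hy]; ring
      simp_rw [h8]
      rw [Finset.sum_add_distrib, Finset.sum_sub_distrib, hxnorm, ← Finset.mul_sum,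
        Finset.sum_const, Finset.card_univ]
      simp only [nsmul_eq_mul, Fintype.card_fin]
      have hxs : ∑ j, x j = (n:ℝ) * c := by
        simp only [hc]; field_simp
      rw [hxs]
      ring
    have hncc : (n:ℝ) * (c * c) ≤ ((n:ℝ) - f) / n := by
      have hS : ∑ j, x j = ∑ j ∈ Fᶜ, x j := hsplitC x hxF
      have hcs := Finset.sum_mul_sq_le_sq_mul_sq Fᶜ x (fun _ => (1:ℝ))
      simp only [mul_one, one_pow] at hcs
      have hsub : ∑ j ∈ Fᶜ, x j ^ 2 ≤ 1 := by
        rw [← hxnorm]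
        have h9 : ∑ j ∈ Fᶜ, x j ^ 2 ≤ ∑ j, x j ^ 2 :=
          Finset.sum_le_sum_of_subset_of_nonneg (Finset.subset_univ _)
            (fun i _ _ => sq_nonneg _)
        calc ∑ j ∈ Fᶜ, x j ^ 2 ≤ ∑ j, x j ^ 2 := h9
          _ = ∑ j, x j * x j := Finset.sum_congr rfl fun j _ => by ring
      have hcard2 : ∑ _j ∈ Fᶜ, (1:ℝ) = (n:ℝ) - f := by
        rw [Finset.sum_const, hcompl, nsmul_eq_mul, hcastnf, mul_one]
      rw [hcard2] at hcs
      have hS2 : (∑ j, x j) ^ 2 ≤ (n:ℝ) - f := by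
        rw [hS]
        calc (∑ j ∈ Fᶜ, x j) ^ 2 ≤ (∑ j ∈ Fᶜ, x j ^ 2) * ((n:ℝ) - f) := hcs
          _ ≤ 1 * ((n:ℝ) - f) := by
              exact mul_le_mul_of_nonneg_right hsub (le_of_lt hnf0)
          _ = (n:ℝ) - f := one_mul _
      have hcc : (n:ℝ) * (c * c) = (∑ j, x j) ^ 2 / n := by
        simp only [hc]; field_simp
      rw [hcc]
      gcongr
    have hfr : (0:ℝ) ≤ (f:ℝ) / n := by positivity
    have hq : ((n:ℝ) - f) / n = 1 - (f:ℝ) / n := by field_simp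
    rcases le_or_gt lam 1 with hl | hl
    · have e1 : ν a0 ≤ lam + (1 - lam) * ((n:ℝ) * (c * c)) := by
        rw [← hxeig, hdec]
        nlinarith [hkb, hyy]
      have e2 : (1 - lam) * ((n:ℝ) * (c * c)) ≤ (1 - lam) * (((n:ℝ) - f) / n) :=
        mul_le_mul_of_nonneg_left hncc (by linarith)
      rw [hq] at e2
      nlinarith
    · have e1 : ν a0 ≤ 1 := by
        rw [← hxeig]
        calc ∑ i, x i * Ah.mulVec x i ≤ |∑ i, x i * Ah.mulVec x i| := le_abs_self _
          _ ≤ ∑ i, x i * x i := rayleigh_abs G hd hreg x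
          _ = 1 := hxnorm
      nlinarith
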